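/- Let k be a field and R = k[x^{±1}, y^{±1}] the Laurent polynomial ring in two variables. Let (F_i) be the Fibonacci sequence with F₀ = 0, F₁ = 1, F_{i} = F_{i−1} + F_{i−2}. Then the intersection of the principal ideals ⟨x^{F_{i+1}} − y^{F_i}⟩ over all i ≥ 1 is the zero ideal. -/

import Mathlib

/-- The Laurent polynomial ring `k[x^{±1}, y^{±1}]`, i.e. the group algebra of `ℤ²`. -/
abbrev Laurent2 (k : Type*) [Field k] := AddMonoidAlgebra k (ℤ × ℤ)

/-- The variable `x`. -/
noncomputable def Lx (k : Type*) [Field k] : Laurent2 k := AddMonoidAlgebra.single (1, 0) 1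

/-- The variable `y`. -/
noncomputable def Ly (k : Type*) [Field k] : Laurent2 k := AddMonoidAlgebra.single (0, 1) 1

/-- The additive group hom `(a, b) ↦ a*m + b*n` from `ℤ²` to `ℤ`. -/
def wHom (m n : ℤ) : ℤ × ℤ →+ ℤ where
  toFun z := z.1 * m + z.2 * n
  map_zero' := by simp
  map_add' z w := by simp [Prod.fst_add, Prod.snd_add]; ring

theorem stmt7 (k : Type*) [Field k] :
    (⨅ (i : ℕ) (_ : 1 ≤ i),
        Ideal.span ({Lx k ^ Nat.fib (i + 1) - Ly k ^ Nat.fib i} : Set (Laurent2 k))) = ⊥ := by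
  rw [eq_bot_iff]
  intro f hf
  simp only [Ideal.mem_iInf] at hf
  rw [Ideal.mem_bot]
  -- choose a big index i
  set N : ℕ := f.coeff.support.sup (fun z => z.1.natAbs) with hN
  set i : ℕ := 2 * N + 5 with hi
  have hfib_big : 2 * N < Nat.fib (i + 1) := by
    have h1 : i + 1 ≤ Nat.fib (i + 1) := Nat.le_fib_self (by omega)
    omega
  have hfib_pos : 0 < Nat.fib (i + 1) := by omega
  -- the ring hom
  set w : ℤ × ℤ →+ ℤ := wHom (Nat.fib i) (Nat.fib (i + 1)) with hw
  set ψ : Laurent2 k →+* AddMonoidAlgebra k ℤ :=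
    AddMonoidAlgebra.mapDomainRingHom k w with hψ
  -- the generator maps to zero
  have hgen : ψ (Lx k ^ Nat.fib (i + 1) - Ly k ^ Nat.fib i) = 0 := by
    have hx : (Lx k ^ Nat.fib (i + 1) : Laurent2 k)
        = AddMonoidAlgebra.single ((Nat.fib (i + 1) : ℤ), (0 : ℤ)) 1 := by
      rw [Lx, AddMonoidAlgebra.single_pow]
      simp [Prod.smul_mk]
    have hy : (Ly k ^ Nat.fib i : Laurent2 k)
        = AddMonoidAlgebra.single ((0 : ℤ), (Nat.fib i : ℤ)) 1 := by
      rw [Ly, AddMonoidAlgebra.single_pow]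
      simp [Prod.smul_mk]
    have hmap : ∀ (z : ℤ × ℤ) (c : k),
        ψ (AddMonoidAlgebra.single z c) = AddMonoidAlgebra.single (w z) c := by
      intro z c
      simp [hψ, AddMonoidAlgebra.mapDomainRingHom, Finsupp.mapDomain_single]
    rw [map_sub, hx, hy, hmap, hmap]
    have : w ((Nat.fib (i + 1) : ℤ), (0 : ℤ)) = w ((0 : ℤ), (Nat.fib i : ℤ)) := by
      simp [hw, wHom]; ring
    rw [this, sub_self]
  -- f maps to zero
  have hf0 : ψ f = 0 := by
    obtain ⟨g, hg⟩ := Ideal.mem_span_singleton'.mp (hf i (by omega))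
    rw [← hg, map_mul, hgen, mul_zero]
  -- w is injective on the support of f
  have hinj : Set.InjOn w (f.coeff.support : Set (ℤ × ℤ)) := by
    intro z₁ hz₁ z₂ hz₂ heq
    simp only [hw, wHom, AddMonoidHom.coe_mk, ZeroHom.coe_mk] at heq
    have hb1 : z₁.1.natAbs ≤ N := Finset.le_sup (f := fun z => z.1.natAbs) hz₁
    have hb2 : z₂.1.natAbs ≤ N := Finset.le_sup (f := fun z => z.1.natAbs) hz₂
    set u : ℤ := z₁.1 - z₂.1 with hu
    set v : ℤ := z₁.2 - z₂.2 with hv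
    have key : u * (Nat.fib i : ℤ) + v * (Nat.fib (i + 1) : ℤ) = 0 := by
      simp only [hu, hv]; linarith
    have hdvd : (Nat.fib (i + 1) : ℤ) ∣ u * (Nat.fib i : ℤ) := by
      refine ⟨-v, ?_⟩; linarith
    have hdvdn : Nat.fib (i + 1) ∣ u.natAbs * Nat.fib i := by
      have := Int.natAbs_dvd_natAbs.mpr hdvd
      simpa [Int.natAbs_mul] using this
    have hcop : Nat.Coprime (Nat.fib (i + 1)) (Nat.fib i) :=
      (Nat.fib_coprime_fib_succ i).symm
    have hdvdu : Nat.fib (i + 1) ∣ u.natAbs :=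
      (Nat.Coprime.dvd_of_dvd_mul_right hcop) hdvdn
    have hub : u.natAbs ≤ 2 * N := by
      have := Int.natAbs_sub_le z₁.1 z₂.1
      omega
    have hu0 : u = 0 := by
      rcases Nat.eq_zero_or_pos u.natAbs with h | h
      · omega
      · exfalso
        have := Nat.le_of_dvd h hdvdu
        omega
    have hv0 : v = 0 := by
      have : v * (Nat.fib (i + 1) : ℤ) = 0 := by
        rw [hu0] at key; linarith
      rcases mul_eq_zero.mp this with h | h
      · exact h
      · exfalso; exact_mod_cast hfib_pos.ne' (by exact_mod_cast h)
    have h1 : z₁.1 = z₂.1 := by omega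
    have h2 : z₁.2 = z₂.2 := by omega
    exact Prod.ext h1 h2
  -- conclude f = 0 using injectivity on the support
  have : ψ f = AddMonoidAlgebra.ofCoeff (Finsupp.mapDomain w f.coeff) := rfl
  rw [this, AddMonoidAlgebra.ofCoeff_eq_zero] at hf0
  suffices hc : f.coeff = 0 by rw [← AddMonoidAlgebra.ofCoeff_coeff f, hc]; rfl
  have h0 : Finsupp.mapDomain (w : ℤ × ℤ → ℤ) (0 : (ℤ × ℤ) →₀ k) = 0 :=
    Finsupp.mapDomain_zero
  refine Finsupp.mapDomain_injOn (f.coeff.support : Set (ℤ × ℤ)) hinj ?_ ?_ (by rw [hf0, h0])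
  · exact fun _ hx => hx
  · simp
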